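/- Let K be a closed segment in ℝ and C ∈ ℝ. The set F^N(K;C) of N-tuples of probability measures on K admitting a coupling concentrated on the hyperplane {x₁+⋯+x_N = C} is a compact convex subset of the N-fold product of the space of signed measures on K with the weak topology, and its extreme points are exactly the tuples (δ_{t₁},…,δ_{t_N}) with t_k ∈ K for all k and t₁+⋯+t_N = C. -/

import Mathlib

open MeasureTheory

/-- membership in F^N(K;C) for K = [a,b]: the tuple admits a coupling supported on K^N and
concentrated on the hyperplane {x₁+⋯+x_N = C}. -/
def memF {N : ℕ} (a b C : ℝ) (μ : Fin N → Measure ℝ) : Prop :=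
  ∃ γ : Measure (Fin N → ℝ), IsProbabilityMeasure γ ∧
    (∀ k, γ.map (fun x => x k) = μ k) ∧
    γ {x | ¬ ∀ k, x k ∈ Set.Icc a b} = 0 ∧
    γ {x | (∑ i, x i) ≠ C} = 0

open Filter Topology TopologicalSpace
open scoped ENNReal NNReal

section CompactAux


lemma exists_ulim {α : Type*} (𝒰 : Ultrafilter α) (g : α → ℝ≥0∞) :
    ∃ l, Filter.Tendsto g (𝒰 : Filter α) (𝓝 l) := by
  obtain ⟨l, -, h⟩ := isCompact_univ.ultrafilter_le_nhds (𝒰.map g) (by simp)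
  exact ⟨l, h⟩

variable {X : Type*} [TopologicalSpace X] [MeasurableSpace X] [BorelSpace X]
  [T2Space X] [SecondCountableTopology X]

lemma isCompact_null2 (U₁ U₂ : Set X) (h₁ : IsOpen U₁) (h₂ : IsOpen U₂)
    (K : Set X) (hK : IsCompact K) (hUK : U₁ᶜ ⊆ K) :
    IsCompact {γ : ProbabilityMeasure X |
      γ.toMeasure U₁ = 0 ∧ γ.toMeasure U₂ = 0} := by
  rw [isCompact_iff_ultrafilter_le_nhds]
  intro 𝒰 h𝒰
  set G : Set (ProbabilityMeasure X) :=
    {γ | γ.toMeasure U₁ = 0 ∧ γ.toMeasure U₂ = 0} with hGdef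
  have hG : G ∈ 𝒰 := Filter.le_principal_iff.mp h𝒰
  -- limits of measures of sets along the ultrafilter
  choose L hL using fun s : Set X =>
    exists_ulim 𝒰 (fun ν : ProbabilityMeasure X => ν.toMeasure s)
  have L_mono : ∀ {s t : Set X}, s ⊆ t → L s ≤ L t := fun {s t} h =>
    le_of_tendsto_of_tendsto' (hL s) (hL t) (fun ν => measure_mono h)
  have L_le_one : ∀ s, L s ≤ 1 := fun s =>
    le_of_tendsto' (hL s) (fun ν => prob_le_one)
  have L_ne_top : ∀ s, L s ≠ ∞ := fun s => ((L_le_one s).trans_lt ENNReal.one_lt_top).ne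
  have L_union : ∀ {s t : Set X}, MeasurableSet t → Disjoint s t →
      L (s ∪ t) = L s + L t := by
    intro s t ht hdis
    refine tendsto_nhds_unique (hL _) (((hL s).add (hL t)).congr (fun ν => ?_))
    exact (measure_union hdis ht).symm
  have L_compl : ∀ {s : Set X}, MeasurableSet s → L s + L sᶜ = 1 := by
    intro s hs
    refine tendsto_nhds_unique (((hL s).add (hL sᶜ))) ?_
    refine Filter.Tendsto.congr (fun ν => ?_) tendsto_const_nhds
    exact ((measure_add_measure_compl hs).trans measure_univ).symm
  have L_union_le : ∀ s t : Set X, L (s ∪ t) ≤ L s + L t := fun s t =>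
    le_of_tendsto_of_tendsto' (hL _) ((hL s).add (hL t)) (fun ν => measure_union_le s t)
  have hU₁0 : L U₁ = 0 := by
    refine tendsto_nhds_unique (hL U₁) ?_
    refine (Filter.tendsto_congr' ?_).mpr tendsto_const_nhds
    exact Filter.eventually_of_mem hG (fun ν hν => hν.1)
  have hU₂0 : L U₂ = 0 := by
    refine tendsto_nhds_unique (hL U₂) ?_
    refine (Filter.tendsto_congr' ?_).mpr tendsto_const_nhds
    exact Filter.eventually_of_mem hG (fun ν hν => hν.2)
  have hK1 : L K = 1 := by
    refine tendsto_nhds_unique (hL K) ?_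
    refine (Filter.tendsto_congr' ?_).mpr tendsto_const_nhds
    refine Filter.eventually_of_mem hG (fun ν hν => ?_)
    have hcompl : ν.toMeasure U₁ᶜ = 1 := by
      rw [measure_compl h₁.measurableSet (measure_ne_top _ _), hν.1, measure_univ, tsub_zero]
    exact le_antisymm prob_le_one (hcompl ▸ measure_mono hUK)
  -- the content given by limits on compact sets
  set c : Content X :=
    { toFun := fun K' => (L K').toNNReal
      mono' := fun K₁ K₂ h =>
        ENNReal.toNNReal_mono (L_ne_top _) (L_mono h)
      sup_disjoint' := by
        intro K₁ K₂ hdis hc1 hc2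
        simp only [Compacts.coe_sup]
        rw [L_union hc2.measurableSet hdis]
        exact ENNReal.toNNReal_add (L_ne_top _) (L_ne_top _)
      sup_le' := by
        intro K₁ K₂
        simp only [Compacts.coe_sup]
        have h1 := L_union_le (K₁ : Set X) (K₂ : Set X)
        have h2 : (L (K₁ : Set X) + L (K₂ : Set X)).toNNReal
            = (L (K₁ : Set X)).toNNReal + (L (K₂ : Set X)).toNNReal :=
          ENNReal.toNNReal_add (L_ne_top _) (L_ne_top _)
        calc (L ((K₁ : Set X) ∪ (K₂ : Set X))).toNNReal
            ≤ (L (K₁ : Set X) + L (K₂ : Set X)).toNNReal :=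
              ENNReal.toNNReal_mono (by simp [ENNReal.add_ne_top, L_ne_top]) h1
          _ = _ := h2 }
    with hcdef
  have hc_coe : ∀ K' : Compacts X, (c K' : ℝ≥0∞) = L (K' : Set X) := fun K' =>
    ENNReal.coe_toNNReal (L_ne_top _)
  set γ₀ : Measure X := c.measure with hγ₀def
  have hopen : ∀ (U : Set X) (hU : IsOpen U),
      γ₀ U = ⨆ (K' : Compacts X) (_ : (K' : Set X) ⊆ U), (c K' : ℝ≥0∞) := by
    intro U hU
    rw [c.measure_apply hU.measurableSet, c.outerMeasure_of_isOpen U hU]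
    rfl
  have hopen_le : ∀ U : Set X, IsOpen U → γ₀ U ≤ L U := by
    intro U hU
    rw [hopen U hU]
    exact iSup₂_le fun K' hK' => (hc_coe K') ▸ L_mono hK'
  have huniv : γ₀ Set.univ = 1 := by
    apply le_antisymm
    · exact (hopen_le _ isOpen_univ).trans (L_le_one _)
    · rw [hopen _ isOpen_univ]
      refine le_trans ?_ (le_iSup₂ (⟨K, hK⟩ : Compacts X) (Set.subset_univ _))
      rw [hc_coe]
      simp only [Compacts.coe_mk]
      rw [hK1]
  have hprob : IsProbabilityMeasure γ₀ := ⟨huniv⟩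
  have hclosed_ge : ∀ F : Set X, IsClosed F → L F ≤ γ₀ F := by
    intro F hF
    have h1 : γ₀ F + γ₀ Fᶜ = 1 := by
      rw [measure_add_measure_compl hF.measurableSet, huniv]
    have h2 : L F + L Fᶜ = 1 := L_compl hF.measurableSet
    have h3 : L F + γ₀ Fᶜ ≤ γ₀ F + γ₀ Fᶜ := by
      calc L F + γ₀ Fᶜ ≤ L F + L Fᶜ := by
            exact add_le_add_right (hopen_le _ hF.isOpen_compl) _
        _ = 1 := h2
        _ = γ₀ F + γ₀ Fᶜ := h1.symm
    exact ENNReal.le_of_add_le_add_right (measure_ne_top _ _) h3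
  have hγU₁ : γ₀ U₁ = 0 := le_antisymm ((hopen_le _ h₁).trans hU₁0.le) zero_le
  have hγU₂ : γ₀ U₂ = 0 := le_antisymm ((hopen_le _ h₂).trans hU₂0.le) zero_le
  refine ⟨⟨γ₀, hprob⟩, ⟨hγU₁, hγU₂⟩, ?_⟩
  have htendsto : Filter.Tendsto (fun ν : ProbabilityMeasure X => ν) 𝒰
      (𝓝 (⟨γ₀, hprob⟩ : ProbabilityMeasure X)) := by
    refine ProbabilityMeasure.tendsto_iff_forall_lintegral_tendsto.mpr ?_
    intro f
    -- notation
    set fc : X → ℝ := fun x => (f x : ℝ) with hfcdef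
    have hfc_cont : Continuous fc := NNReal.continuous_coe.comp f.continuous
    have hfc_nn : ∀ x, 0 ≤ fc x := fun x => (f x).2
    set Mr : ℝ := dist f 0 with hMrdef
    have hMr0 : 0 ≤ Mr := dist_nonneg
    have hfc_bd : ∀ x, fc x ≤ Mr := by
      intro x
      have h1 := BoundedContinuousFunction.dist_coe_le_dist (f := f) (g := 0) x
      simpa [NNReal.dist_eq] using h1
    -- countable set of atoms
    have hDcnt : Set.Countable {t : ℝ | γ₀ {x | fc x = t} ≠ 0} := by
      have h1 := Measure.countable_meas_level_set_pos
        (μ := γ₀) (g := fc) hfc_cont.measurable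
      simpa [pos_iff_ne_zero] using h1
    -- the sandwich: limits at non-atoms
    have hLW : ∀ t : ℝ, γ₀ {x | fc x = t} = 0 → L {x | t < fc x} = γ₀ {x | t < fc x} := by
      intro t hatom
      have hWo : IsOpen {x | t < fc x} := isOpen_lt continuous_const hfc_cont
      have hFc : IsClosed {x | t ≤ fc x} := isClosed_le continuous_const hfc_cont
      have hsub : {x | t < fc x} ⊆ {x | t ≤ fc x} := by
        intro x hx
        simp only [Set.mem_setOf_eq] at *
        exact hx.le
      have hdecomp : γ₀ {x | t ≤ fc x} = γ₀ {x | t < fc x} := by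
        have hset : {x | t ≤ fc x} = {x | t < fc x} ∪ {x | fc x = t} := by
          ext x
          simp only [Set.mem_setOf_eq, Set.mem_union]
          constructor
          · intro h
            rcases lt_or_eq_of_le h with h | h
            · exact Or.inl h
            · exact Or.inr h.symm
          · rintro (h | h)
            · exact le_of_lt h
            · exact h.ge
        rw [hset, measure_union ?_
          (show MeasurableSet {x | fc x = t} from
            hfc_cont.measurable (measurableSet_singleton t)), hatom, add_zero]
        exact Set.disjoint_left.mpr (fun x hx hx' => absurd hx' (ne_of_gt hx))
      apply le_antisymm
      · calc L {x | t < fc x} ≤ L {x | t ≤ fc x} := L_mono hsub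
          _ ≤ γ₀ {x | t ≤ fc x} := hclosed_ge _ hFc
          _ = γ₀ {x | t < fc x} := hdecomp
      · exact hopen_le _ hWo
    obtain ⟨l, hl⟩ := exists_ulim 𝒰 (fun ν : ProbabilityMeasure X => ∫⁻ x, f x ∂ν.toMeasure)
    -- uniform bound
    have hfM : ∀ x, ((f x : ℝ≥0) : ℝ≥0∞) ≤ ENNReal.ofReal Mr := by
      intro x
      rw [← ENNReal.ofReal_coe_nnreal]
      exact ENNReal.ofReal_le_ofReal (hfc_bd x)
    have hIbd : ∀ (ρ : Measure X), IsProbabilityMeasure ρ →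
        ∫⁻ x, (f x : ℝ≥0∞) ∂ρ ≤ ENNReal.ofReal Mr := by
      intro ρ hρ
      calc ∫⁻ x, (f x : ℝ≥0∞) ∂ρ ≤ ∫⁻ _, ENNReal.ofReal Mr ∂ρ :=
            lintegral_mono (fun x => hfM x)
        _ = ENNReal.ofReal Mr := by rw [lintegral_const, measure_univ, mul_one]
    -- main ε-estimate
    have key : ∀ ε : ℝ, 0 < ε →
        l ≤ (∫⁻ x, (f x : ℝ≥0∞) ∂γ₀) + ENNReal.ofReal ε ∧
        (∫⁻ x, (f x : ℝ≥0∞) ∂γ₀) ≤ l + ENNReal.ofReal ε := by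
      intro ε hε
      set cg : ℝ := ε / 2 with hcgdef
      have hcg : 0 < cg := by positivity
      set m : ℕ := ⌈Mr / cg⌉₊ + 1 with hmdef
      have hmc : Mr ≤ m * cg := by
        have h1 : Mr / cg ≤ (⌈Mr / cg⌉₊ : ℝ) := Nat.le_ceil _
        have h2 : (⌈Mr / cg⌉₊ : ℝ) ≤ m := by
          rw [hmdef]
          push_cast
          linarith
        have h3 : Mr = (Mr / cg) * cg := by field_simp
        rw [h3]
        exact mul_le_mul_of_nonneg_right (h1.trans h2) hcg.le
      set D := {t : ℝ | γ₀ {x | fc x = t} ≠ 0} with hDdef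
      set bad : Set ℝ := ⋃ j ∈ Finset.range (m + 2), (fun s : ℝ => s + j * cg) ⁻¹' D
        with hbaddef
      have hbadcnt : Set.Countable bad := by
        refine Set.Countable.biUnion (Finset.range (m + 2)).countable_toSet (fun j _ => ?_)
        exact Set.Countable.preimage hDcnt (add_left_injective _)
      obtain ⟨θ, hθIoo, hθbad⟩ : ∃ θ, θ ∈ Set.Ioo (0:ℝ) cg ∧ θ ∉ bad := by
        by_contra hcon
        push_neg at hcon
        have hsub : Set.Ioo (0:ℝ) cg ⊆ bad := fun θ hθ => hcon θ hθ
        have h1 := measure_mono (μ := volume) hsub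
        rw [Set.Countable.measure_zero hbadcnt] at h1
        rw [Real.volume_Ioo] at h1
        simp only [nonpos_iff_eq_zero, ENNReal.ofReal_eq_zero] at h1
        linarith
      set τ : ℕ → ℝ := fun j => θ + j * cg with hτdef
      have hτsucc : ∀ j : ℕ, τ (j + 1) = τ j + cg := by
        intro j
        simp only [hτdef]
        push_cast
        ring
      have hτ0 : 0 < τ 0 := by simpa [hτdef] using hθIoo.1
      have hτ1 : τ 1 ≤ ε := by
        have := hθIoo.2
        simp only [hτdef]
        push_cast
        rw [hcgdef] at *
        linarith
    
      have hτnonatom : ∀ j : ℕ, j < m + 2 → γ₀ {x | fc x = τ j} = 0 := by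
        intro j hj
        by_contra hne
        apply hθbad
        rw [hbaddef]
        exact Set.mem_iUnion₂.mpr ⟨j, Finset.mem_range.mpr hj,
          by simpa [hτdef, hDdef] using hne⟩
      have hτm : Mr ≤ τ m := by
        have : (m : ℝ) * cg ≤ τ m := by
          simp only [hτdef]
          linarith [hθIoo.1]
        linarith
      set W : ℕ → Set X := fun j => {x | τ j < fc x} with hWdef
      have hWm : ∀ j, MeasurableSet (W j) :=
        fun j => measurableSet_lt measurable_const hfc_cont.measurable
      have hWtend : ∀ j, j < m + 2 →
          Filter.Tendsto (fun ν : ProbabilityMeasure X => ν.toMeasure (W j)) 𝒰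
            (𝓝 (γ₀ (W j))) := by
        intro j hj
        have h1 := hLW (τ j) (hτnonatom j hj)
        rw [← h1]
        exact hL _
      set T : Measure X → ℝ≥0∞ :=
        fun ρ => ∑ k ∈ Finset.range m, ENNReal.ofReal cg * ρ (W (k + 1)) with hTdef
      -- pointwise per-term estimates
      have hperup : ∀ (r : ℝ) (j : ℕ), 0 ≤ r →
          min r (τ (j+1)) - min r (τ j) ≤ (if τ j < r then cg else 0) := by
        intro r j hr
        have h1 := hτsucc j
        simp only [min_def]
        split_ifs <;> linarith
      have hperlo : ∀ (r : ℝ) (j : ℕ), 0 ≤ r →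
          (if τ (j+1) < r then cg else 0) ≤ min r (τ (j+1)) - min r (τ j) := by
        intro r j hr
        have h1 := hτsucc j
        simp only [min_def]
        split_ifs <;> linarith
      have hptA : ∀ x : X,
          ∑ k ∈ Finset.range m, (if τ (k+1) < fc x then cg else 0) ≤ fc x := by
        intro x
        have h1 : ∑ k ∈ Finset.range m, (if τ (k+1) < fc x then cg else 0)
            ≤ ∑ k ∈ Finset.range m, (min (fc x) (τ (k+1)) - min (fc x) (τ k)) :=
          Finset.sum_le_sum (fun k _ => hperlo (fc x) k (hfc_nn x))
        rw [Finset.sum_range_sub (fun k => min (fc x) (τ k))] at h1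
        have h2 : min (fc x) (τ m) ≤ fc x := min_le_left _ _
        have h3 : 0 ≤ min (fc x) (τ 0) := le_min (hfc_nn x) hτ0.le
        linarith
      have hptB : ∀ x : X,
          fc x ≤ τ 1 + ∑ k ∈ Finset.range m, (if τ (k+1) < fc x then cg else 0) := by
        intro x
        have h1 : ∑ k ∈ Finset.range m, (min (fc x) (τ (k+1+1)) - min (fc x) (τ (k+1)))
            ≤ ∑ k ∈ Finset.range m, (if τ (k+1) < fc x then cg else 0) :=
          Finset.sum_le_sum (fun k _ => hperup (fc x) (k+1) (hfc_nn x))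
        rw [Finset.sum_range_sub (fun k => min (fc x) (τ (k+1)))] at h1
        have h2 : min (fc x) (τ (m+1)) = fc x := by
          apply min_eq_left
          calc fc x ≤ Mr := hfc_bd x
            _ ≤ τ m := hτm
            _ ≤ τ (m+1) := by rw [hτsucc m]; linarith
        have h3 : min (fc x) (τ 1) ≤ τ 1 := min_le_right _ _
        rw [h2] at h1
        linarith
      -- integral identities
      have hsummeas : ∀ k : ℕ, Measurable
          (fun x => (W (k+1)).indicator (fun _ => ENNReal.ofReal cg) x) :=
        fun k => measurable_const.indicator (hWm (k+1))
      have hTsimp : ∀ ρ : Measure X,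
          ∫⁻ x, ENNReal.ofReal (∑ k ∈ Finset.range m, (if τ (k+1) < fc x then cg else 0)) ∂ρ
            = T ρ := by
        intro ρ
        have hptw : ∀ x : X,
            ENNReal.ofReal (∑ k ∈ Finset.range m, (if τ (k+1) < fc x then cg else 0))
              = ∑ k ∈ Finset.range m, (W (k+1)).indicator (fun _ => ENNReal.ofReal cg) x := by
          intro x
          rw [ENNReal.ofReal_sum_of_nonneg (fun k _ => by positivity)]
          refine Finset.sum_congr rfl (fun k _ => ?_)
          by_cases hx : x ∈ W (k+1)
          · have hx' : τ (k+1) < fc x := hx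
            rw [if_pos hx', Set.indicator_of_mem hx]
          · have hx' : ¬ τ (k+1) < fc x := hx
            rw [if_neg hx', Set.indicator_of_notMem hx, ENNReal.ofReal_zero]
        rw [lintegral_congr hptw, lintegral_finset_sum _ (fun k _ => hsummeas k)]
        refine Finset.sum_congr rfl (fun k _ => ?_)
        rw [lintegral_indicator_const (hWm (k+1))]
      have hTlo : ∀ ρ : Measure X, T ρ ≤ ∫⁻ x, (f x : ℝ≥0∞) ∂ρ := by
        intro ρ
        rw [← hTsimp ρ]
        refine lintegral_mono (fun x => ?_)
        calc ENNReal.ofReal (∑ k ∈ Finset.range m, (if τ (k+1) < fc x then cg else 0))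
            ≤ ENNReal.ofReal (fc x) := ENNReal.ofReal_le_ofReal (hptA x)
          _ = ((f x : ℝ≥0) : ℝ≥0∞) := ENNReal.ofReal_coe_nnreal
      have hThi : ∀ ρ : Measure X, IsProbabilityMeasure ρ →
          ∫⁻ x, (f x : ℝ≥0∞) ∂ρ ≤ ENNReal.ofReal ε + T ρ := by
        intro ρ hρ
        have hptw : ∀ x : X, ((f x : ℝ≥0) : ℝ≥0∞) ≤ ENNReal.ofReal ε +
            ENNReal.ofReal (∑ k ∈ Finset.range m, (if τ (k+1) < fc x then cg else 0)) := by
          intro x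
          have h1 : fc x ≤ ε + ∑ k ∈ Finset.range m, (if τ (k+1) < fc x then cg else 0) := by
            have := hptB x
            have hsumnn : (0:ℝ) ≤ ∑ k ∈ Finset.range m, (if τ (k+1) < fc x then cg else 0) :=
              Finset.sum_nonneg (fun k _ => by positivity)
            linarith [hτ1]
          calc ((f x : ℝ≥0) : ℝ≥0∞) = ENNReal.ofReal (fc x) := ENNReal.ofReal_coe_nnreal.symm
            _ ≤ ENNReal.ofReal (ε + ∑ k ∈ Finset.range m, (if τ (k+1) < fc x then cg else 0)) :=
                ENNReal.ofReal_le_ofReal h1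
            _ = ENNReal.ofReal ε + ENNReal.ofReal
                (∑ k ∈ Finset.range m, (if τ (k+1) < fc x then cg else 0)) := by
                rw [ENNReal.ofReal_add hε.le
                  (Finset.sum_nonneg (fun k _ => by positivity))]
        calc ∫⁻ x, ((f x : ℝ≥0) : ℝ≥0∞) ∂ρ
            ≤ ∫⁻ x, (ENNReal.ofReal ε + ENNReal.ofReal
                (∑ k ∈ Finset.range m, (if τ (k+1) < fc x then cg else 0))) ∂ρ :=
              lintegral_mono hptw
          _ = ENNReal.ofReal ε + T ρ := by
              rw [lintegral_add_left measurable_const, lintegral_const, measure_univ, mul_one,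
                hTsimp ρ]
      have hTtend : Filter.Tendsto (fun ν : ProbabilityMeasure X => T ν.toMeasure) 𝒰
          (𝓝 (T γ₀)) := by
        refine tendsto_finset_sum _ (fun k hk => ?_)
        refine ENNReal.Tendsto.const_mul ?_ (Or.inr ENNReal.ofReal_ne_top)
        refine hWtend (k+1) ?_
        have := Finset.mem_range.mp hk
        omega
      constructor
      · calc l ≤ ENNReal.ofReal ε + T γ₀ :=
              le_of_tendsto_of_tendsto' hl (tendsto_const_nhds.add hTtend)
                (fun ν => hThi _ inferInstance)
          _ ≤ ENNReal.ofReal ε + ∫⁻ x, (f x : ℝ≥0∞) ∂γ₀ := add_le_add_right (hTlo γ₀) _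
          _ = (∫⁻ x, (f x : ℝ≥0∞) ∂γ₀) + ENNReal.ofReal ε := add_comm _ _
      · calc ∫⁻ x, (f x : ℝ≥0∞) ∂γ₀ ≤ ENNReal.ofReal ε + T γ₀ := hThi γ₀ hprob
          _ ≤ ENNReal.ofReal ε + l :=
              add_le_add_right (le_of_tendsto_of_tendsto' hTtend hl (fun ν => hTlo _)) _
          _ = l + ENNReal.ofReal ε := add_comm _ _
    have hleq : l = ∫⁻ x, (f x : ℝ≥0∞) ∂γ₀ := by
      apply le_antisymm
      · refine ENNReal.le_of_forall_pos_le_add (fun ε hε _ => ?_)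
        have h1 := (key ε (by exact_mod_cast hε)).1
        rwa [ENNReal.ofReal_coe_nnreal] at h1
      · refine ENNReal.le_of_forall_pos_le_add (fun ε hε _ => ?_)
        have h1 := (key ε (by exact_mod_cast hε)).2
        rwa [ENNReal.ofReal_coe_nnreal] at h1
    exact hleq ▸ hl
  exact htendsto
end CompactAux

lemma memF_convex {N : ℕ} (a b C : ℝ) (μ ν : Fin N → Measure ℝ) (hμ : memF a b C μ)
    (hν : memF a b C ν) (α : ℝ) (h0 : 0 ≤ α) (h1 : α ≤ 1) :
    memF a b C (fun k => ENNReal.ofReal α • μ k + ENNReal.ofReal (1 - α) • ν k) := by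
  obtain ⟨γ₁, hp1, hm1, hs1, hc1⟩ := hμ
  obtain ⟨γ₂, hp2, hm2, hs2, hc2⟩ := hν
  refine ⟨ENNReal.ofReal α • γ₁ + ENNReal.ofReal (1 - α) • γ₂, ?_, ?_, ?_, ?_⟩
  · constructor
    rw [Measure.add_apply]
    simp [hp1.measure_univ, hp2.measure_univ, smul_eq_mul]
    rw [← ENNReal.ofReal_add h0 (by linarith)]
    norm_num
  · intro k
    rw [Measure.map_add _ _ (measurable_pi_apply k),
      Measure.map_smul, Measure.map_smul, hm1 k, hm2 k]
  · rw [Measure.add_apply, Measure.smul_apply, Measure.smul_apply, hs1, hs2]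
    simp
  · rw [Measure.add_apply]
    simp [hc1, hc2]
open scoped ENNReal NNReal

lemma eq_dirac_of_compl {ν : Measure ℝ} [IsProbabilityMeasure ν] {t : ℝ}
    (h : ν {t}ᶜ = 0) : ν = Measure.dirac t := by
  ext s hs
  rw [Measure.dirac_apply' t hs]
  by_cases hts : t ∈ s
  · have h1 : ν s + ν sᶜ = 1 := by
      rw [measure_add_measure_compl hs]; exact measure_univ
    have h2 : ν sᶜ = 0 := measure_mono_null (by simpa using hts) h
    rw [h2, add_zero] at h1
    rw [h1, Set.indicator_of_mem hts]
    rfl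
  · have : ν s = 0 := measure_mono_null (by simpa using hts) h
    simp [this, Set.indicator_of_notMem hts]

lemma exists_dirac_of_zero_one {ν : Measure ℝ} [IsProbabilityMeasure ν]
    (h : ∀ s : Set ℝ, MeasurableSet s → ν s = 0 ∨ ν s = 1) :
    ∃ t : ℝ, ν = Measure.dirac t := by
  -- the set of c with ν (Iic c) = 1
  set S : Set ℝ := {c | ν (Set.Iic c) = 1} with hS
  have hne : S.Nonempty := by
    have h1 : Filter.Tendsto (fun c => ν (Set.Iic c)) Filter.atTop (nhds 1) := by
      simpa [measure_univ] using MeasureTheory.tendsto_measure_Iic_atTop (μ := ν)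
    obtain ⟨c, hc⟩ := (h1.eventually_ne one_ne_zero).exists
    refine ⟨c, ?_⟩
    rcases h _ measurableSet_Iic with h0 | h1
    · exact absurd h0 hc
    · exact h1
  have hbdd : BddBelow S := by
    by_contra hb
    -- then there are elements of S tending to -∞; ν (Iic c) = 1 for arbitrarily small c
    have hall : ∀ c : ℝ, ν (Set.Iic c) = 1 := by
      intro c
      obtain ⟨d, hd, hdc⟩ : ∃ d ∈ S, d < c := by
        rw [not_bddBelow_iff] at hb
        obtain ⟨d, hd, hdc⟩ := hb c
        exact ⟨d, hd, hdc⟩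
      have := measure_mono (Set.Iic_subset_Iic.mpr hdc.le) (μ := ν)
      rw [hd] at this
      exact le_antisymm (prob_le_one) this
    have hanti : Antitone (fun n : ℕ => Set.Iic (-(n:ℝ))) := by
      intro m n hmn
      exact Set.Iic_subset_Iic.mpr (by exact_mod_cast neg_le_neg (Nat.cast_le.mpr hmn))
    have h0 : ν (⋂ n : ℕ, Set.Iic (-(n:ℝ))) = 1 := by
      rw [hanti.measure_iInter (fun n => measurableSet_Iic.nullMeasurableSet)
        ⟨0, measure_ne_top _ _⟩]
      simp [hall]
    have hemp : (⋂ n : ℕ, Set.Iic (-(n:ℝ))) = ∅ := by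
      ext x
      simp only [Set.mem_iInter, Set.mem_Iic, Set.mem_empty_iff_false, iff_false, not_forall]
      obtain ⟨n, hn⟩ := exists_nat_gt (-x)
      exact ⟨n, by push_neg; linarith⟩
    rw [hemp] at h0
    simp at h0
  set t := sInf S with ht
  have hup : ∀ c, t < c → ν (Set.Iic c) = 1 := by
    intro c hc
    obtain ⟨d, hd, hdc⟩ := (csInf_lt_iff hbdd hne).mp hc
    have := measure_mono (Set.Iic_subset_Iic.mpr hdc.le) (μ := ν)
    rw [hd] at this
    exact le_antisymm prob_le_one this
  have hlow : ∀ c, c < t → ν (Set.Iic c) = 0 := by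
    intro c hc
    rcases h _ measurableSet_Iic with h0 | h1
    · exact h0
    · exact absurd (csInf_le hbdd h1) (not_le.mpr hc)
  -- ν (Iic t) = 1 via continuity from above
  have hIic : ν (Set.Iic t) = 1 := by
    have : Set.Iic t = ⋂ n : ℕ, Set.Iic (t + 1 / (n+1)) := by
      ext x
      simp only [Set.mem_Iic, Set.mem_iInter]
      constructor
      · intro hx n; have : (0:ℝ) < 1/(n+1) := by positivity
        linarith
      · intro hx
        by_contra hxt
        push_neg at hxt
        obtain ⟨n, hn⟩ := exists_nat_one_div_lt (sub_pos.mpr hxt)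
        have := hx n
        linarith
    rw [this]
    have hanti : Antitone (fun n : ℕ => Set.Iic (t + 1/((n:ℝ)+1))) := by
      intro m n hmn
      apply Set.Iic_subset_Iic.mpr
      have hc : (m:ℝ) ≤ n := Nat.cast_le.mpr hmn
      have h9 : (1:ℝ)/((n:ℝ)+1) ≤ 1/((m:ℝ)+1) :=
        one_div_le_one_div_of_le (by positivity) (by linarith)
      linarith
    rw [hanti.measure_iInter
      (fun n => (measurableSet_Iic (a := t + 1/((n:ℝ)+1))).nullMeasurableSet)
      ⟨0, measure_ne_top _ _⟩]
    have h8 : ∀ n : ℕ, ν (Set.Iic (t + 1/((n:ℝ)+1))) = 1 :=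
      fun n => hup _ (lt_add_of_pos_right _ (by positivity))
    simp only [one_div] at h8
    simp [h8]
  have hIio : ν (Set.Iio t) = 0 := by
    have : Set.Iio t = ⋃ n : ℕ, Set.Iic (t - 1/(n+1)) := by
      ext x
      simp only [Set.mem_Iio, Set.mem_iUnion, Set.mem_Iic]
      constructor
      · intro hx
        obtain ⟨n, hn⟩ := exists_nat_one_div_lt (sub_pos.mpr hx)
        exact ⟨n, by linarith⟩
      · intro ⟨n, hn⟩
        have : (0:ℝ) < 1/(n+1) := by positivity
        linarith
    rw [this]
    exact measure_iUnion_null fun n => hlow _ (sub_lt_self _ (by positivity))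
  refine ⟨t, eq_dirac_of_compl ?_⟩
  have hct : ({t}ᶜ : Set ℝ) = Set.Iio t ∪ Set.Ioi t := by
    ext x
    simp only [Set.mem_compl_iff, Set.mem_singleton_iff, Set.mem_union, Set.mem_Iio, Set.mem_Ioi]
    exact ne_iff_lt_or_gt
  rw [hct]
  refine measure_union_null hIio ?_
  have hdisj : Disjoint (Set.Iic t) (Set.Ioi t) := Set.Iic_disjoint_Ioi le_rfl
  have h2 : ν (Set.Iic t) + ν (Set.Ioi t) = 1 := by
    rw [← measure_union hdisj measurableSet_Ioi, Set.Iic_union_Ioi]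
    exact measure_univ
  rw [hIic] at h2
  have h3 : (1:ℝ≥0∞) + ν (Set.Ioi t) = 1 + 0 := by rw [add_zero]; exact h2
  exact (ENNReal.add_right_inj ENNReal.one_ne_top).mp h3

section Extreme
variable {N : ℕ} (a b C : ℝ)

lemma measurable_sum_pi : Measurable (fun x : Fin N → ℝ => ∑ i, x i) :=
  Finset.measurable_sum Finset.univ (fun i _ => measurable_pi_apply i)

lemma measU1 : MeasurableSet {x : Fin N → ℝ | ¬ ∀ k, x k ∈ Set.Icc a b} := by
  have : {x : Fin N → ℝ | ¬ ∀ k, x k ∈ Set.Icc a b}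
      = (⋂ k, (fun x : Fin N → ℝ => x k) ⁻¹' Set.Icc a b)ᶜ := by
    ext x; simp
  rw [this]
  exact (MeasurableSet.iInter fun k => (measurable_pi_apply k) measurableSet_Icc).compl

lemma measU2 : MeasurableSet {x : Fin N → ℝ | (∑ i, x i) ≠ C} :=
  (measurable_sum_pi (measurableSet_singleton C)).compl

lemma memF_prob {μ : Fin N → Measure ℝ} (h : memF a b C μ) (k : Fin N) :
    IsProbabilityMeasure (μ k) := by
  obtain ⟨γ, hp, hm, -, -⟩ := h
  rw [← hm k]
  exact Measure.isProbabilityMeasure_map (measurable_pi_apply k).aemeasurable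

lemma extreme_iff (μ : Fin N → Measure ℝ) (hprob : ∀ k, IsProbabilityMeasure (μ k)) :
    ((memF a b C μ ∧
        ∀ (μ₁ μ₂ : Fin N → Measure ℝ),
          memF a b C μ₁ → memF a b C μ₂ → ∀ α : ℝ, 0 < α → α < 1 →
          (∀ k, μ k = ENNReal.ofReal α • μ₁ k + ENNReal.ofReal (1 - α) • μ₂ k) →
          μ₁ = μ₂)
      ↔ ∃ t : Fin N → ℝ, (∀ k, t k ∈ Set.Icc a b) ∧ (∑ k, t k) = C ∧
          ∀ k, μ k = Measure.dirac (t k)) := by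
  constructor
  · rintro ⟨hmem, hext⟩
    -- Step 1: each μ k takes only values 0 and 1
    have h01 : ∀ k, ∀ s : Set ℝ, MeasurableSet s → μ k s = 0 ∨ μ k s = 1 := by
      intro j A hA
      by_contra hcon
      push_neg at hcon
      obtain ⟨hA0, hA1⟩ := hcon
      obtain ⟨γ, hp, hm, hs, hc⟩ := hmem
      set E : Set (Fin N → ℝ) := (fun x => x j) ⁻¹' A with hE
      have hEm : MeasurableSet E := (measurable_pi_apply j) hA
      have hcE : γ E = μ j A := by
        rw [← hm j, Measure.map_apply (measurable_pi_apply j) hA]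
      have hc0 : γ E ≠ 0 := by rw [hcE]; exact hA0
      have hc1lt : γ E < 1 := by
        rw [hcE]; exact lt_of_le_of_ne prob_le_one hA1
      have hctop : γ E ≠ ⊤ := (lt_of_lt_of_le hc1lt le_top).ne  -- crude
      have hcompl : γ Eᶜ = 1 - γ E := by
        rw [measure_compl hEm (measure_ne_top _ _), measure_univ]
      have hcc0 : γ Eᶜ ≠ 0 := by
        rw [hcompl]
        simp only [ne_eq, tsub_eq_zero_iff_le, not_le]
        exact hc1lt
      have hcctop : γ Eᶜ ≠ ⊤ := measure_ne_top _ _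
      set γ₁ := (γ E)⁻¹ • γ.restrict E with hγ₁
      set γ₂ := (γ Eᶜ)⁻¹ • γ.restrict Eᶜ with hγ₂
      have hre : γ.restrict E Set.univ = γ E := by
        rw [Measure.restrict_apply_univ]
      have hrec : γ.restrict Eᶜ Set.univ = γ Eᶜ := by
        rw [Measure.restrict_apply_univ]
      have hp1 : IsProbabilityMeasure γ₁ := by
        constructor
        rw [hγ₁, Measure.smul_apply, hre, smul_eq_mul, ENNReal.inv_mul_cancel hc0 hctop]
      have hp2 : IsProbabilityMeasure γ₂ := by
        constructor
        rw [hγ₂, Measure.smul_apply, hrec, smul_eq_mul, ENNReal.inv_mul_cancel hcc0 hcctop]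
      set ν₁ : Fin N → Measure ℝ := fun k => γ₁.map (fun x => x k) with hν₁
      set ν₂ : Fin N → Measure ℝ := fun k => γ₂.map (fun x => x k) with hν₂
      have hmemν₁ : memF a b C ν₁ := by
        refine ⟨γ₁, hp1, fun k => rfl, ?_, ?_⟩
        · rw [hγ₁, Measure.smul_apply]
          have : γ.restrict E {x | ¬ ∀ k, x k ∈ Set.Icc a b} = 0 :=
            le_antisymm (le_trans (Measure.restrict_le_self _) hs.le) zero_le
          rw [this, smul_zero]
        · rw [hγ₁, Measure.smul_apply]
          have : γ.restrict E {x | (∑ i, x i) ≠ C} = 0 :=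
            le_antisymm (le_trans (Measure.restrict_le_self _) hc.le) zero_le
          rw [this, smul_zero]
      have hmemν₂ : memF a b C ν₂ := by
        refine ⟨γ₂, hp2, fun k => rfl, ?_, ?_⟩
        · rw [hγ₂, Measure.smul_apply]
          have : γ.restrict Eᶜ {x | ¬ ∀ k, x k ∈ Set.Icc a b} = 0 :=
            le_antisymm (le_trans (Measure.restrict_le_self _) hs.le) zero_le
          rw [this, smul_zero]
        · rw [hγ₂, Measure.smul_apply]
          have : γ.restrict Eᶜ {x | (∑ i, x i) ≠ C} = 0 :=
            le_antisymm (le_trans (Measure.restrict_le_self _) hc.le) zero_le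
          rw [this, smul_zero]
      set α : ℝ := (γ E).toReal with hα
      have hα0 : 0 < α := ENNReal.toReal_pos hc0 hctop
      have hα1 : α < 1 := by
        rw [hα]
        have := ENNReal.toReal_lt_toReal hctop (ENNReal.one_ne_top)
        rw [ENNReal.toReal_one] at this
        exact this.mpr hc1lt
      have hofReal : ENNReal.ofReal α = γ E := ENNReal.ofReal_toReal hctop
      have hofReal' : ENNReal.ofReal (1 - α) = γ Eᶜ := by
        rw [ENNReal.ofReal_sub _ hα0.le, ENNReal.ofReal_one, hofReal, hcompl]
      have hdecomp : ∀ k, μ k = ENNReal.ofReal α • ν₁ k + ENNReal.ofReal (1 - α) • ν₂ k := by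
        intro k
        rw [hofReal, hofReal']
        have h₁ : γ E • γ₁ = γ.restrict E := by
          rw [hγ₁, smul_smul, ENNReal.mul_inv_cancel hc0 hctop, one_smul]
        have h₂ : γ Eᶜ • γ₂ = γ.restrict Eᶜ := by
          rw [hγ₂, smul_smul, ENNReal.mul_inv_cancel hcc0 hcctop, one_smul]
        rw [← hm k, hν₁, hν₂]
        simp only
        rw [← Measure.map_smul, ← Measure.map_smul, h₁, h₂,
          ← Measure.map_add _ _ (measurable_pi_apply k),
          Measure.restrict_add_restrict_compl hEm]
      have heq := hext ν₁ ν₂ hmemν₁ hmemν₂ α hα0 hα1 hdecomp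
      -- contradiction: ν₁ j A = 1, ν₂ j A = 0
      have hv1 : ν₁ j A = 1 := by
        rw [hν₁]
        simp only
        rw [Measure.map_apply (measurable_pi_apply j) hA, hγ₁, Measure.smul_apply,
          Measure.restrict_apply hEm]
        rw [Set.inter_self, smul_eq_mul, ENNReal.inv_mul_cancel hc0 hctop]
      have hv2 : ν₂ j A = 0 := by
        rw [hν₂]
        simp only
        rw [Measure.map_apply (measurable_pi_apply j) hA, hγ₂, Measure.smul_apply,
          Measure.restrict_apply hEm]
        rw [Set.inter_compl_self, measure_empty, smul_eq_mul, mul_zero]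
      rw [heq] at hv1
      rw [hv1] at hv2
      exact one_ne_zero hv2
    -- Step 2: each μ k is a dirac
    have hdirac : ∀ k, ∃ t : ℝ, μ k = Measure.dirac t := by
      intro k
      have := hprob k
      exact exists_dirac_of_zero_one (h01 k)
    choose t ht using hdirac
    -- Step 3: the point t has the required properties
    obtain ⟨γ, hp, hm, hs, hc⟩ := hmem
    have hnull : ∀ k, γ ((fun x => x k) ⁻¹' {t k}ᶜ) = 0 := by
      intro k
      rw [← Measure.map_apply (measurable_pi_apply k) (measurableSet_singleton (t k)).compl,
        hm k, ht k, Measure.dirac_apply' _ (measurableSet_singleton (t k)).compl]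
      simp
    set B : Set (Fin N → ℝ) := {x | ¬ ∀ k, x k ∈ Set.Icc a b} ∪ {x | (∑ i, x i) ≠ C}
        ∪ ⋃ k, ((fun x => x k) ⁻¹' {t k}ᶜ) with hB
    have hBnull : γ B = 0 := by
      rw [hB]
      refine measure_union_null (measure_union_null hs hc) (measure_iUnion_null hnull)
    have hBne : Bᶜ.Nonempty := by
      by_contra hone
      rw [Set.not_nonempty_iff_eq_empty, ← Set.compl_univ, compl_inj_iff] at hone
      rw [hone, measure_univ] at hBnull
      exact one_ne_zero hBnull
    obtain ⟨x, hx⟩ := hBne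
    rw [hB] at hx
    simp only [Set.compl_union, Set.mem_inter_iff, Set.mem_compl_iff, Set.mem_setOf_eq,
      not_not, Set.mem_iUnion, not_exists, Set.mem_preimage, Set.mem_singleton_iff] at hx
    obtain ⟨⟨hx1, hx2⟩, hx3⟩ := hx
    have hxt : ∀ k, x k = t k := by
      intro k
      have := hx3 k
      simpa using this
    refine ⟨t, fun k => hxt k ▸ hx1 k, ?_, ht⟩
    rw [← hx2]
    exact Finset.sum_congr rfl (fun k _ => (hxt k).symm)
  · rintro ⟨t, hti, hts, htd⟩
    constructor
    · refine ⟨Measure.dirac t, inferInstance, ?_, ?_, ?_⟩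
      · intro k
        rw [Measure.map_dirac' (measurable_pi_apply k), htd k]
      · rw [Measure.dirac_apply' _ (measU1 a b)]
        have : t ∉ {x : Fin N → ℝ | ¬ ∀ k, x k ∈ Set.Icc a b} := by
          simp only [Set.mem_setOf_eq, not_not]
          simpa using hti
        exact Set.indicator_of_notMem this _
      · rw [Measure.dirac_apply' _ (measU2 C)]
        have : t ∉ {x : Fin N → ℝ | (∑ i, x i) ≠ C} := by
          simp [hts]
        exact Set.indicator_of_notMem this _
    · intro μ₁ μ₂ h₁ h₂ α hα0 hα1 hdec
      have key : ∀ k, μ₁ k = Measure.dirac (t k) ∧ μ₂ k = Measure.dirac (t k) := by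
        intro k
        have hd := hdec k
        have hμ1p : IsProbabilityMeasure (μ₁ k) := memF_prob a b C h₁ k
        have hμ2p : IsProbabilityMeasure (μ₂ k) := memF_prob a b C h₂ k
        have hnull : μ k {t k}ᶜ = 0 := by
          rw [htd k, Measure.dirac_apply' _ (measurableSet_singleton (t k)).compl]
          simp
        rw [hd] at hnull
        rw [Measure.add_apply, Measure.smul_apply, Measure.smul_apply] at hnull
        have hz := add_eq_zero.mp hnull
        have hz1 : μ₁ k {t k}ᶜ = 0 := by
          rcases hz with ⟨h, -⟩
          have : ENNReal.ofReal α ≠ 0 := by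
            simp [ENNReal.ofReal_eq_zero, not_le, hα0]
          simpa [this] using h
        have hz2 : μ₂ k {t k}ᶜ = 0 := by
          rcases hz with ⟨-, h⟩
          have : ENNReal.ofReal (1 - α) ≠ 0 := by
            simp only [ne_eq, ENNReal.ofReal_eq_zero, not_le]
            linarith
          simpa [this] using h
        exact ⟨eq_dirac_of_compl hz1, eq_dirac_of_compl hz2⟩
      funext k
      rw [(key k).1, (key k).2]

end Extreme


lemma stmt_compact {N : ℕ} (a b C : ℝ) :
    IsCompact {μ : Fin N → ProbabilityMeasure ℝ | memF a b C (fun k => (μ k).toMeasure)} := by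
  set U₁ := {x : Fin N → ℝ | ¬ ∀ k, x k ∈ Set.Icc a b} with hU₁def
  set U₂ := {x : Fin N → ℝ | (∑ i, x i) ≠ C} with hU₂def
  have h₁ : IsOpen U₁ := by
    have hset : U₁ = (⋂ k, (fun x : Fin N → ℝ => x k) ⁻¹' Set.Icc a b)ᶜ := by
      ext x; simp [hU₁def]
    rw [hset]
    exact (isClosed_iInter fun k => isClosed_Icc.preimage (continuous_apply k)).isOpen_compl
  have hsum : Continuous (fun x : Fin N → ℝ => ∑ i, x i) :=
    continuous_finset_sum Finset.univ (fun i _ => continuous_apply i)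
  have h₂ : IsOpen U₂ := by
    have hset : U₂ = ((fun x : Fin N → ℝ => ∑ i, x i) ⁻¹' {C})ᶜ := by
      ext x; simp [hU₂def]
    rw [hset]
    exact (isClosed_singleton.preimage hsum).isOpen_compl
  have hKcomp : IsCompact (Set.Icc (fun _ => a : Fin N → ℝ) (fun _ => b)) := isCompact_Icc
  have hUK : U₁ᶜ ⊆ Set.Icc (fun _ => a : Fin N → ℝ) (fun _ => b) := by
    intro x hx
    simp only [hU₁def, Set.mem_compl_iff, Set.mem_setOf_eq, not_not] at hx
    constructor
    · intro k; exact (hx k).1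
    · intro k; exact (hx k).2
  have hGcomp := isCompact_null2 U₁ U₂ h₁ h₂ _ hKcomp hUK
  have hΦcont : Continuous (fun γ : ProbabilityMeasure (Fin N → ℝ) =>
      fun k : Fin N => γ.map (continuous_apply k).measurable.aemeasurable) :=
    continuous_pi (fun k => ProbabilityMeasure.continuous_map (continuous_apply k))
  have himg : {μ : Fin N → ProbabilityMeasure ℝ | memF a b C (fun k => (μ k).toMeasure)}
      = (fun γ : ProbabilityMeasure (Fin N → ℝ) =>
          fun k : Fin N => γ.map (continuous_apply k).measurable.aemeasurable)
        '' {γ : ProbabilityMeasure (Fin N → ℝ) | γ.toMeasure U₁ = 0 ∧ γ.toMeasure U₂ = 0} := by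
    ext μ
    simp only [Set.mem_setOf_eq, Set.mem_image]
    constructor
    · rintro ⟨γ, hp, hm, hs, hc⟩
      refine ⟨⟨γ, hp⟩, ⟨hs, hc⟩, ?_⟩
      funext k
      apply ProbabilityMeasure.toMeasure_injective
      refine (ProbabilityMeasure.toMeasure_map _ _).trans ?_
      exact hm k
    · rintro ⟨γ, ⟨hs, hc⟩, rfl⟩
      refine ⟨γ.toMeasure, inferInstance, ?_, hs, hc⟩
      intro k
      exact (ProbabilityMeasure.toMeasure_map γ _).symm
  rw [himg]
  exact hGcomp.image hΦcont


/-- F^N(K;C) is compact and convex in the weak topology, and its extreme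
points are exactly the tuples (δ_{t₁},…,δ_{t_N}) with t_k ∈ K and Σ t_k = C. -/
theorem stmt17 {N : ℕ} (a b C : ℝ) (hab : a ≤ b) :
    IsCompact {μ : Fin N → ProbabilityMeasure ℝ | memF a b C (fun k => (μ k).toMeasure)}
    ∧ (∀ μ ν : Fin N → Measure ℝ, memF a b C μ → memF a b C ν →
        ∀ α : ℝ, 0 ≤ α → α ≤ 1 →
        memF a b C (fun k => ENNReal.ofReal α • μ k + ENNReal.ofReal (1 - α) • ν k))
    ∧ (∀ μ : Fin N → Measure ℝ, (∀ k, IsProbabilityMeasure (μ k)) →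
        ((memF a b C μ ∧
            ∀ (μ₁ μ₂ : Fin N → Measure ℝ),
              memF a b C μ₁ → memF a b C μ₂ → ∀ α : ℝ, 0 < α → α < 1 →
              (∀ k, μ k = ENNReal.ofReal α • μ₁ k + ENNReal.ofReal (1 - α) • μ₂ k) →
              μ₁ = μ₂)
          ↔ ∃ t : Fin N → ℝ, (∀ k, t k ∈ Set.Icc a b) ∧ (∑ k, t k) = C ∧
              ∀ k, μ k = Measure.dirac (t k))) := by
  exact ⟨stmt_compact a b C,
    fun μ ν hμ hν α h0 h1 => memF_convex a b C μ ν hμ hν α h0 h1,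
    fun μ hp => extreme_iff a b C μ hp⟩
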